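/- Let A_i : X → Y_i, s ∈ X, y_i ∈ Y_i, w_i = A_i s − y_i ≠ 0, u_i = A_i* w_i ≠ 0, and suppose w_i ⟨A_i A_i* w_i, w_i⟩ = ‖w_i‖² A_i u_i (as elements of Y_i). Then with κ_i = (‖w_i‖² − E_i‖w_i‖)/‖u_i‖² and 0 ≤ E_i ≤ ‖w_i‖, one has ‖y_i − A_i(s − κ_i u_i)‖ = E_i. -/

import Mathlib

open scoped InnerProductSpace

/-- Under the condition `w_i ⟨A_i A_i* w_i, w_i⟩ = ‖w_i‖² A_i u_i`, the metric
projection stepsize achieves the prescribed residual level `E_i`. -/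
theorem metric_projection_one_step_general
    {X Yi : Type*} [NormedAddCommGroup X] [InnerProductSpace ℝ X] [CompleteSpace X]
    [NormedAddCommGroup Yi] [InnerProductSpace ℝ Yi] [CompleteSpace Yi]
    (Ai : X →L[ℝ] Yi) (s : X) (yi : Yi) (wi : Yi) (ui : X) (Ei : ℝ)
    (hwi : wi = Ai s - yi) (hwne : wi ≠ 0)
    (hui : ui = (ContinuousLinearMap.adjoint Ai) wi) (hune : ui ≠ 0)
    (hkey : ⟪Ai ((ContinuousLinearMap.adjoint Ai) wi), wi⟫_ℝ • wi = ‖wi‖ ^ 2 • Ai ui)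
    (hE0 : 0 ≤ Ei) (hEw : Ei ≤ ‖wi‖) :
    ‖yi - Ai (s - ((‖wi‖ ^ 2 - Ei * ‖wi‖) / ‖ui‖ ^ 2) • ui)‖ = Ei := by
  have hwn : ‖wi‖ ≠ 0 := norm_ne_zero_iff.mpr hwne
  have hun : ‖ui‖ ≠ 0 := norm_ne_zero_iff.mpr hune
  have hc : ⟪Ai ((ContinuousLinearMap.adjoint Ai) wi), wi⟫_ℝ = ‖ui‖ ^ 2 := by
    rw [← ContinuousLinearMap.adjoint_inner_right, ← hui, real_inner_self_eq_norm_sq]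
  rw [hc] at hkey
  have hAu : Ai ui = (‖ui‖ ^ 2 / ‖wi‖ ^ 2) • wi := by
    symm
    rw [div_eq_inv_mul, ← smul_smul, hkey, smul_smul,
      inv_mul_cancel₀ (pow_ne_zero 2 hwn), one_smul]
  have hy : yi = Ai s - wi := by rw [hwi]; abel
  have h1 : Ai (s - ((‖wi‖ ^ 2 - Ei * ‖wi‖) / ‖ui‖ ^ 2) • ui)
      = Ai s - ((‖wi‖ ^ 2 - Ei * ‖wi‖) / ‖ui‖ ^ 2) • Ai ui := by
    simp [map_sub, map_smul]
  have key : yi - Ai (s - ((‖wi‖ ^ 2 - Ei * ‖wi‖) / ‖ui‖ ^ 2) • ui)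
      = (-(Ei / ‖wi‖)) • wi := by
    have hκ : ((‖wi‖ ^ 2 - Ei * ‖wi‖) / ‖ui‖ ^ 2) * (‖ui‖ ^ 2 / ‖wi‖ ^ 2)
        = 1 - Ei / ‖wi‖ := by
      field_simp
    rw [hy, h1, hAu, smul_smul, hκ]
    module
  rw [key, norm_smul]
  rw [norm_neg, Real.norm_eq_abs, abs_of_nonneg (div_nonneg hE0 (norm_nonneg wi)),
    div_mul_cancel₀ _ hwn]
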